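/- Let E be a field, G a group, H a subgroup of G of index 2, and ρ : G → GL₂(E) a homomorphism such that ρ(h) is diagonal for every h ∈ H and ρ(g) is the antidiagonal matrix [[0, η'(g)],[η(g), 0]] with η(g), η'(g) ∈ Eˣ for every g ∈ G ∖ H. Let ρ' : G → M₂(E) be an adjoint 1-cocycle for ρ, write e_ij(g) for the (i,j) entry of ρ'(g), and define ρ̃(g) := (1 + ε ρ'(g)) ρ(g) over the dual numbers E[ε]. Then for every g ∈ G ∖ H: Tr ρ̃(g) = (η(g) e₁₂(g) + η'(g) e₂₁(g)) · ε, and this equals η(g) e₁₂(g²) · ε and also η'(g) e₂₁(g²) · ε. -/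

import Mathlib

open Matrix DualNumber

/-- The first-order deformation `ρ̃(g) = (1 + ε ρ'(g)) ρ(g)` of a representation
`ρ : G → GLₙ(E)` along a map `ρ' : G → Mₙ(E)`, with values in matrices over the dual
numbers `E[ε]`. -/
def firstOrderDeformation {E : Type} [CommRing E] {n : ℕ} {G : Type} [Group G]
    (ρ : G →* GL (Fin n) E) (ρ' : G → Matrix (Fin n) (Fin n) E) (g : G) :
    Matrix (Fin n) (Fin n) (DualNumber E) :=
  (1 + (ε : DualNumber E) • (ρ' g).map (algebraMap E (DualNumber E))) *
    ((ρ g : Matrix (Fin n) (Fin n) E).map (algebraMap E (DualNumber E)))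

/-- **Statement 7.** Let `E` be a field, `G` a group, `H ≤ G` a subgroup of index `2`, and
`ρ : G → GL₂(E)` a homomorphism with `ρ(h)` diagonal for `h ∈ H` and
`ρ(g) = [[0, η'(g)],[η(g), 0]]` antidiagonal, with `η(g), η'(g) ∈ Eˣ`, for `g ∉ H`.  Let
`ρ' : G → M₂(E)` be an adjoint 1-cocycle for `ρ`, with entries `e_ij`, and set
`ρ̃(g) := (1 + ε ρ'(g)) ρ(g)` over the dual numbers `E[ε]`.  Then for every `g ∈ G ∖ H`:
`Tr ρ̃(g) = (η(g) e₁₂(g) + η'(g) e₂₁(g)) · ε`, and this equals `η(g) e₁₂(g²) · ε` and also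
`η'(g) e₂₁(g²) · ε`. -/
theorem statement7 (E : Type) [Field E] (G : Type) [Group G] (H : Subgroup G)
    (hH : H.index = 2) (ρ : G →* GL (Fin 2) E) (η η' : G → Eˣ)
    (hdiag : ∀ h : G, h ∈ H → (ρ h : Matrix (Fin 2) (Fin 2) E) 0 1 = 0 ∧
      (ρ h : Matrix (Fin 2) (Fin 2) E) 1 0 = 0)
    (hanti : ∀ g : G, g ∉ H →
      (ρ g : Matrix (Fin 2) (Fin 2) E) = !![0, (η' g : E); (η g : E), 0])
    (ρ' : G → Matrix (Fin 2) (Fin 2) E)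
    (hcoc : ∀ g h : G, ρ' (g * h) =
      ρ' g + (ρ g : Matrix (Fin 2) (Fin 2) E) * ρ' h * ((ρ g)⁻¹ : GL (Fin 2) E)) :
    ∀ g : G, g ∉ H →
      (firstOrderDeformation ρ ρ' g).trace =
        algebraMap E (DualNumber E) ((η g : E) * ρ' g 0 1 + (η' g : E) * ρ' g 1 0) *
          (ε : DualNumber E) ∧
      (firstOrderDeformation ρ ρ' g).trace =
        algebraMap E (DualNumber E) ((η g : E) * ρ' (g * g) 0 1) * (ε : DualNumber E) ∧
      (firstOrderDeformation ρ ρ' g).trace =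
        algebraMap E (DualNumber E) ((η' g : E) * ρ' (g * g) 1 0) * (ε : DualNumber E) := by
  intro g hg
  have hA := hanti g hg
  have hAinv : (((ρ g)⁻¹ : GL (Fin 2) E) : Matrix (Fin 2) (Fin 2) E) =
      !![0, (η g : E)⁻¹; (η' g : E)⁻¹, 0] := by
    rw [Matrix.coe_units_inv, hA]
    apply inv_eq_right_inv
    ext i j
    fin_cases i <;> fin_cases j <;>
      simp [Matrix.mul_apply, Fin.sum_univ_two, Matrix.one_apply]
  have htr : (firstOrderDeformation ρ ρ' g).trace =
      algebraMap E (DualNumber E) ((η g : E) * ρ' g 0 1 + (η' g : E) * ρ' g 1 0) *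
        (ε : DualNumber E) := by
    rw [firstOrderDeformation, hA, Matrix.trace_fin_two]
    simp [Matrix.mul_apply, Fin.sum_univ_two, Matrix.one_apply, Matrix.map_apply]
    ring
  have h01 : (η g : E) * ρ' (g * g) 0 1 =
      (η g : E) * ρ' g 0 1 + (η' g : E) * ρ' g 1 0 := by
    rw [hcoc g g, hAinv, hA]
    simp only [Matrix.add_apply, Matrix.mul_apply, Fin.sum_univ_two,
      Matrix.cons_val_zero, Matrix.cons_val_one, Matrix.head_cons, Matrix.head_fin_const,
      Matrix.cons_val', Matrix.empty_val', Matrix.cons_val_fin_one, Matrix.of_apply]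
    field_simp
    ring
  have h10 : (η' g : E) * ρ' (g * g) 1 0 =
      (η g : E) * ρ' g 0 1 + (η' g : E) * ρ' g 1 0 := by
    rw [hcoc g g, hAinv, hA]
    simp only [Matrix.add_apply, Matrix.mul_apply, Fin.sum_univ_two,
      Matrix.cons_val_zero, Matrix.cons_val_one, Matrix.head_cons, Matrix.head_fin_const,
      Matrix.cons_val', Matrix.empty_val', Matrix.cons_val_fin_one, Matrix.of_apply]
    field_simp
    ring
  exact ⟨htr, by rw [htr, h01], by rw [htr, h10]⟩
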